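/- Let q2 > 3/2 and q1 > 0 with Q := 1/q1 + 1/q2 < 1. Then there is a constant C such that for all μ ≥ 2, ∫₀^∞ ( ∫₀^1 ∫₁^μ ρ(t, s+v) ds dt )² dv ≤ C, where ρ(t,s) = (|t|^{q1} + |s|^{q2})^{-1}. (This is the case (3 − 2q2) ∨ 0 = 0 of the bound O(μ^{(3−2q2)∨0}).) -/

import Mathlib

open MeasureTheory Real Set

noncomputable def rho (q1 q2 t s : ℝ) : ℝ := (|t| ^ q1 + |s| ^ q2)⁻¹

theorem stmt_11 (q1 q2 : ℝ) (hq1 : 0 < q1) (hq2 : 3 / 2 < q2)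
    (hQ : 1 / q1 + 1 / q2 < 1) :
    ∃ C : ℝ, ∀ μ : ℝ, 2 ≤ μ →
      ∫⁻ v in Ioi (0 : ℝ),
        ENNReal.ofReal ((∫ t in Ioc (0 : ℝ) 1, ∫ s in Ioc (1 : ℝ) μ,
          rho q1 q2 t (s + v)) ^ 2)
        ≤ ENNReal.ofReal C := by
  have hq2one : (1:ℝ) < q2 := by linarith
  have hd : (0:ℝ) < q2 - 1 := by linarith
  set r : ℝ := 1 - q2 with hrdef
  have hr : r < 0 := by simp [hrdef]; linarith
  have h2r : 2 * r < -1 := by simp [hrdef]; linarith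
  -- the dominating function
  set G : ℝ → ℝ := fun v => (1 + v) ^ (2 * r) / (q2 - 1) ^ 2 with hGdef
  have hGcont : ContinuousOn (fun v : ℝ => (1 + v) ^ (2 * r)) (Ici (0:ℝ)) := by
    apply ContinuousOn.rpow_const
    · exact (continuous_const.add continuous_id).continuousOn
    · intro x hx
      left
      have : (0:ℝ) < 1 + x := by simp at hx; linarith
      exact ne_of_gt this
  have hGint : IntegrableOn G (Ioi (0:ℝ)) := by
    have hnum : IntegrableOn (fun v : ℝ => (1 + v) ^ (2 * r)) (Ioi (0:ℝ)) := by
      have hunion : Ioc (0:ℝ) 1 ∪ Ioi (1:ℝ) = Ioi 0 := Ioc_union_Ioi_eq_Ioi zero_le_one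
      rw [← hunion]
      apply IntegrableOn.union
      · exact ((hGcont.mono (Icc_subset_Ici_self)).integrableOn_Icc).mono_set Ioc_subset_Icc_self
      · apply Integrable.mono' (integrableOn_Ioi_rpow_of_lt h2r one_pos)
        · exact (hGcont.mono (fun x hx => by simp only [mem_Ioi] at hx; exact mem_Ici.mpr (by linarith) : Ioi (1:ℝ) ⊆ Ici 0)).aestronglyMeasurable measurableSet_Ioi
        · filter_upwards [ae_restrict_mem measurableSet_Ioi] with x hx
          have hx1 : (1:ℝ) < x := hx
          rw [Real.norm_eq_abs, abs_of_nonneg (Real.rpow_nonneg (by linarith) _)]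
          exact Real.rpow_le_rpow_of_nonpos (by linarith) (by linarith) (le_of_lt (by linarith))
    exact hnum.div_const _
  refine ⟨∫ v in Ioi (0:ℝ), G v, fun μ hμ => ?_⟩
  have hμ1 : (1:ℝ) ≤ μ := by linarith
  -- pointwise bound on the double integral
  have key : ∀ v ∈ Ioi (0:ℝ),
      (∫ t in Ioc (0:ℝ) 1, ∫ s in Ioc (1:ℝ) μ, rho q1 q2 t (s + v)) ^ 2 ≤ G v := by
    intro v hv
    have hv0 : (0:ℝ) < v := hv
    set B : ℝ := (1 + v) ^ r / (q2 - 1) with hBdef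
    have hB0 : 0 ≤ B := by
      apply div_nonneg (Real.rpow_nonneg (by linarith) _) (by linarith)
    -- bound for the inner integral, uniform in t
    have inner_bound : ∀ t : ℝ, (∫ s in Ioc (1:ℝ) μ, rho q1 q2 t (s + v)) ≤ B := by
      intro t
      have hInt : IntegrableOn (fun s => (s + v) ^ (-q2)) (Ioc 1 μ) := by
        apply (ContinuousOn.integrableOn_Icc _).mono_set Ioc_subset_Icc_self
        apply ContinuousOn.rpow_const
        · exact (continuous_id.add continuous_const).continuousOn
        · intro x hx
          left
          have : (1:ℝ) ≤ x := hx.1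
          positivity
      have step1 : (∫ s in Ioc (1:ℝ) μ, rho q1 q2 t (s + v))
          ≤ ∫ s in Ioc (1:ℝ) μ, (s + v) ^ (-q2) := by
        apply integral_mono_of_nonneg _ hInt
        · filter_upwards [ae_restrict_mem measurableSet_Ioc] with s hs
          have hsv : (0:ℝ) < s + v := by have := hs.1; linarith
          have h1 : |s + v| ^ q2 ≤ |t| ^ q1 + |s + v| ^ q2 :=
            le_add_of_nonneg_left (by positivity)
          have h2 : (0:ℝ) < |s + v| ^ q2 := by
            apply Real.rpow_pos_of_pos; rw [abs_of_pos hsv]; exact hsv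
          calc rho q1 q2 t (s + v) ≤ (|s + v| ^ q2)⁻¹ := by
                exact inv_anti₀ h2 h1
            _ = (s + v) ^ (-q2) := by
                rw [abs_of_pos hsv, Real.rpow_neg hsv.le]
        · filter_upwards with s
          have : (0:ℝ) ≤ |t| ^ q1 + |s + v| ^ q2 := by positivity
          exact inv_nonneg.mpr this
      have step2 : (∫ s in Ioc (1:ℝ) μ, (s + v) ^ (-q2))
          = ((μ + v) ^ (-q2 + 1) - (1 + v) ^ (-q2 + 1)) / (-q2 + 1) := by
        rw [← intervalIntegral.integral_of_le hμ1]
        rw [intervalIntegral.integral_comp_add_right (fun x => x ^ (-q2)) v]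
        apply integral_rpow
        right
        constructor
        · intro h; rw [neg_eq_iff_eq_neg] at h; linarith
        · intro h
          rcases h with ⟨h1, _⟩
          simp only [inf_le_iff] at h1
          rcases h1 with h | h <;> linarith
      have step3 : ((μ + v) ^ (-q2 + 1) - (1 + v) ^ (-q2 + 1)) / (-q2 + 1) ≤ B := by
        have hrw : ((μ + v) ^ (-q2 + 1) - (1 + v) ^ (-q2 + 1)) / (-q2 + 1)
            = ((1 + v) ^ (-q2 + 1) - (μ + v) ^ (-q2 + 1)) / (q2 - 1) := by
          have hne : -q2 + 1 ≠ 0 := by intro h; linarith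
          field_simp
          ring
        rw [hrw, hBdef]
        have hre : r = -q2 + 1 := by rw [hrdef]; ring
        rw [hre]
        apply div_le_div_of_nonneg_right _ hd.le
        have : (0:ℝ) ≤ (μ + v) ^ (-q2 + 1) := Real.rpow_nonneg (by linarith) _
        linarith
      calc (∫ s in Ioc (1:ℝ) μ, rho q1 q2 t (s + v))
          ≤ ∫ s in Ioc (1:ℝ) μ, (s + v) ^ (-q2) := step1
        _ = _ := step2
        _ ≤ B := step3
    have inner_nonneg : ∀ t : ℝ, 0 ≤ ∫ s in Ioc (1:ℝ) μ, rho q1 q2 t (s + v) := by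
      intro t
      apply setIntegral_nonneg measurableSet_Ioc
      intro s _
      have : (0:ℝ) ≤ |t| ^ q1 + |s + v| ^ q2 := by positivity
      exact inv_nonneg.mpr this
    -- outer integral bound
    have outer_nonneg : 0 ≤ ∫ t in Ioc (0:ℝ) 1, ∫ s in Ioc (1:ℝ) μ, rho q1 q2 t (s + v) := by
      apply setIntegral_nonneg measurableSet_Ioc
      intro t _; exact inner_nonneg t
    have outer_bound : (∫ t in Ioc (0:ℝ) 1, ∫ s in Ioc (1:ℝ) μ, rho q1 q2 t (s + v)) ≤ B := by
      have hconst : IntegrableOn (fun _ : ℝ => B) (Ioc (0:ℝ) 1) :=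
        (integrableOn_const_iff).mpr (Or.inr measure_Ioc_lt_top)
      have h := integral_mono_of_nonneg
        (f := fun t => ∫ s in Ioc (1:ℝ) μ, rho q1 q2 t (s + v))
        (g := fun _ => B) (μ := volume.restrict (Ioc (0:ℝ) 1))
        (ae_of_all _ inner_nonneg) hconst (ae_of_all _ inner_bound)
      calc (∫ t in Ioc (0:ℝ) 1, ∫ s in Ioc (1:ℝ) μ, rho q1 q2 t (s + v))
          ≤ ∫ _t in Ioc (0:ℝ) 1, B := h
        _ = B * (volume (Ioc (0:ℝ) 1)).toReal := by
            rw [setIntegral_const, smul_eq_mul, mul_comm]; rfl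
        _ = B := by simp
    -- square
    have hsq : (∫ t in Ioc (0:ℝ) 1, ∫ s in Ioc (1:ℝ) μ, rho q1 q2 t (s + v)) ^ 2 ≤ B ^ 2 :=
      pow_le_pow_left₀ outer_nonneg outer_bound 2
    have hBsq : B ^ 2 = G v := by
      rw [hBdef, hGdef, div_pow]
      congr 1
      rw [← Real.rpow_natCast ((1 + v) ^ r) 2, ← Real.rpow_mul (by linarith)]
      norm_num
      ring_nf
    rw [← hBsq]; exact hsq
  calc ∫⁻ v in Ioi (0:ℝ), ENNReal.ofReal ((∫ t in Ioc (0:ℝ) 1,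
          ∫ s in Ioc (1:ℝ) μ, rho q1 q2 t (s + v)) ^ 2)
      ≤ ∫⁻ v in Ioi (0:ℝ), ENNReal.ofReal (G v) := by
        apply lintegral_mono_ae
        filter_upwards [ae_restrict_mem measurableSet_Ioi] with v hv
        exact ENNReal.ofReal_le_ofReal (key v hv)
    _ = ENNReal.ofReal (∫ v in Ioi (0:ℝ), G v) := by
        rw [ofReal_integral_eq_lintegral_ofReal hGint]
        filter_upwards [ae_restrict_mem measurableSet_Ioi] with v hv
        apply div_nonneg (Real.rpow_nonneg _ _) (by positivity)
        have : (0:ℝ) < v := hv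
        linarith
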